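/- arXiv:1901.11174 — 2 statements merged into one kernel-verified Lean document; each statement's English description precedes it below -/
import Mathlib

section
/- Suppose V : ℝⁿ × ℝ → ℝ satisfies V(x,0) ≤ 1 for all x ∈ X₀, and ∂V/∂t(x,t) + ∇ₓV(x,t)ᵀ f(x,u,w) ≤ wᵀw for all x ∈ X_c, t ∈ [0,T], u ∈ Y, w ∈ ℝ^{m_w}, where X_c contains FR(X₀,f,t,Y,γ) for all t ∈ [0,T]. Then FR(X₀, f, T, Y, γ) ⊆ { x ∈ ℝⁿ : V(x,T) ≤ 1 + γ }. -/
open Set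

/-- If `V(x,0) ≤ 1` on `X₀` and the dissipation inequality
`∂V/∂t + ∇ₓV ⬝ f ≤ wᵀw` holds on a set `X_c` containing all the reachable sets,
then the forward reachable set at time `T` is contained in `{x | V(x,T) ≤ 1 + γ}`. -/
theorem reachable_subset_sublevel
    {n m_u m_w : ℕ}
    (f : (Fin n → ℝ) → (Fin m_u → ℝ) → (Fin m_w → ℝ) → (Fin n → ℝ))
    (φ : (Fin n → ℝ) → (ℝ → Fin m_u → ℝ) → (ℝ → Fin m_w → ℝ) → ℝ → (Fin n → ℝ))
    (T : ℝ) (hT : 0 < T) (Y : Set (Fin m_u → ℝ)) (γ : ℝ) (hγ : 0 ≤ γ)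
    (X₀ Xc : Set (Fin n → ℝ))
    (UY : Set (ℝ → Fin m_u → ℝ))
    (hUY : UY = {u | ∀ t ∈ Icc (0:ℝ) T, u t ∈ Y})
    (Wγ : Set (ℝ → Fin m_w → ℝ))
    (hWγ : Wγ = {w | IntervalIntegrable (fun t => ∑ i, (w t i)^2) MeasureTheory.volume 0 T ∧
      (∫ t in (0:ℝ)..T, ∑ i, (w t i)^2) < γ})
    (FR : ℝ → Set (Fin n → ℝ))
    (hFR : ∀ t, FR t = {y | ∃ x ∈ X₀, ∃ u ∈ UY, ∃ w ∈ Wγ, φ x u w t = y})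
    -- solution map: initial condition
    (hφ0 : ∀ x u w, φ x u w 0 = x)
    -- V together with its partial derivatives ∂V/∂t and ∇ₓV
    (V : (Fin n → ℝ) → ℝ → ℝ) (Vt : (Fin n → ℝ) → ℝ → ℝ)
    (Vgrad : (Fin n → ℝ) → ℝ → (Fin n → ℝ))
    -- chain rule along trajectories
    (hchain : ∀ x₀ ∈ X₀, ∀ u ∈ UY, ∀ w ∈ Wγ, ∀ t ∈ Icc (0:ℝ) T,
      HasDerivAt (fun s => V (φ x₀ u w s) s)
        (Vt (φ x₀ u w t) t +
          ∑ i, Vgrad (φ x₀ u w t) t i * f (φ x₀ u w t) (u t) (w t) i) t)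
    -- inequality (2): V(x,0) ≤ 1 on X₀
    (hV0 : ∀ x ∈ X₀, V x 0 ≤ 1)
    -- inequality (3): dissipation inequality on Xc
    (hdiss : ∀ x ∈ Xc, ∀ t ∈ Icc (0:ℝ) T, ∀ u ∈ Y, ∀ w : Fin m_w → ℝ,
      Vt x t + ∑ i, Vgrad x t i * f x u w i ≤ ∑ i, (w i)^2)
    -- Xc contains the reachable sets at all intermediate times
    (hXc : ∀ t ∈ Icc (0:ℝ) T, FR t ⊆ Xc) :
    FR T ⊆ {x : Fin n → ℝ | V x T ≤ 1 + γ} := by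
  intro y hy
  rw [hFR] at hy
  obtain ⟨x₀, hx₀, u, hu, w, hw, hφT⟩ := hy
  rw [hWγ] at hw
  obtain ⟨hint, hlt⟩ := hw
  have key : V (φ x₀ u w T) T - V (φ x₀ u w 0) 0 ≤ ∫ t in (0:ℝ)..T, ∑ i, (w t i)^2 := by
    apply intervalIntegral.sub_le_integral_of_hasDeriv_right_of_le hT.le
    · intro t ht
      exact ((hchain x₀ hx₀ u hu w (by rw [hWγ]; exact ⟨hint, hlt⟩) t ht).continuousAt).continuousWithinAt
    · intro t ht
      exact (hchain x₀ hx₀ u hu w (by rw [hWγ]; exact ⟨hint, hlt⟩) t ⟨ht.1.le, ht.2.le⟩).hasDerivWithinAt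
    · rw [integrableOn_Icc_iff_integrableOn_Ioc]
      exact (intervalIntegrable_iff_integrableOn_Ioc_of_le hT.le).mp hint
    · intro t ht
      have htI : t ∈ Icc (0:ℝ) T := ⟨ht.1.le, ht.2.le⟩
      have hmem : φ x₀ u w t ∈ Xc := by
        apply hXc t htI
        rw [hFR]
        exact ⟨x₀, hx₀, u, hu, w, by rw [hWγ]; exact ⟨hint, hlt⟩, rfl⟩
      have huY : u t ∈ Y := by rw [hUY] at hu; exact hu t htI
      exact hdiss _ hmem t htI _ huY (w t)
  rw [hφ0] at key
  have h1 := hV0 x₀ hx₀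
  rw [← hφT]
  simp only [mem_setOf_eq]
  linarith
end

section
/- Suppose g_X, g_C, g_U are polynomials with X₀ ⊆ {x : g_X(x) ≥ 0}, Y ⊆ {u : g_U(u) ≥ 0}, and FR(X₀,f,t,Y,γ) ⊆ {x : g_C(x) ≥ 0} for all t ∈ [0,T]. If V(x,t) = z_d(x)ᵀP(t)z_d(x) is a polynomial such that (1 − V(x,0)) − s₁(x)g_X(x) is SOS for some SOS s₁, and −(∂V/∂t + ∇ₓVᵀ f(x,u,w) − wᵀw) − s₂ g_C(x) − s₃ t(T−t) − s₄ g_U(u) is SOS for some SOS multipliers s₂,s₃,s₄, then FR(X₀,f,T,Y,γ) ⊆ { x : z_d(x)ᵀP(T)z_d(x) ≤ 1 + γ }. -/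
open Set Matrix

/-- A real-valued function on `α` is a (pointwise) sum of squares of functions
(in the application, the `q i` are polynomials). -/
def IsSOSFun {α : Type*} (g : α → ℝ) : Prop :=
  ∃ (k : ℕ) (q : Fin k → α → ℝ), ∀ a, g a = ∑ i, (q i a) ^ 2

/-- Proposition 1: If `V(x,t) = z_d(x)ᵀ P(t) z_d(x)` satisfies the SOS
certificates for the initial-set and dissipation inequalities, with `X₀ ⊆ {g_X ≥ 0}`,
`Y ⊆ {g_U ≥ 0}` and `FR(X₀,f,t,Y,γ) ⊆ {g_C ≥ 0}` for all `t ∈ [0,T]`, then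
`FR(X₀,f,T,Y,γ) ⊆ {x | z_d(x)ᵀ P(T) z_d(x) ≤ 1 + γ}`. -/
theorem sos_outer_approximation_reachable
    {n m_u m_w N : ℕ}
    (f : (Fin n → ℝ) → (Fin m_u → ℝ) → (Fin m_w → ℝ) → (Fin n → ℝ))
    (φ : (Fin n → ℝ) → (ℝ → Fin m_u → ℝ) → (ℝ → Fin m_w → ℝ) → ℝ → (Fin n → ℝ))
    (T : ℝ) (hT : 0 < T) (Y : Set (Fin m_u → ℝ)) (γ : ℝ) (hγ : 0 ≤ γ)
    (X₀ : Set (Fin n → ℝ))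
    (UY : Set (ℝ → Fin m_u → ℝ))
    (hUY : UY = {u | ∀ t ∈ Icc (0:ℝ) T, u t ∈ Y})
    (Wγ : Set (ℝ → Fin m_w → ℝ))
    (hWγ : Wγ = {w | IntervalIntegrable (fun t => ∑ i, (w t i)^2) MeasureTheory.volume 0 T ∧
      (∫ t in (0:ℝ)..T, ∑ i, (w t i)^2) < γ})
    (FR : ℝ → Set (Fin n → ℝ))
    (hFR : ∀ t, FR t = {y | ∃ x ∈ X₀, ∃ u ∈ UY, ∃ w ∈ Wγ, φ x u w t = y})
    (hφ0 : ∀ x u w, φ x u w 0 = x)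
    -- the monomial vector, the matrix-valued function, and V
    (zd : (Fin n → ℝ) → (Fin N → ℝ)) (P : ℝ → Matrix (Fin N) (Fin N) ℝ)
    (V : (Fin n → ℝ) → ℝ → ℝ)
    (hVdef : ∀ x t, V x t = zd x ⬝ᵥ (P t).mulVec (zd x))
    -- partial derivatives of V and the chain rule along trajectories
    (Vt : (Fin n → ℝ) → ℝ → ℝ) (Vgrad : (Fin n → ℝ) → ℝ → (Fin n → ℝ))
    (hchain : ∀ x₀ ∈ X₀, ∀ u ∈ UY, ∀ w ∈ Wγ, ∀ t ∈ Icc (0:ℝ) T,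
      HasDerivAt (fun s => V (φ x₀ u w s) s)
        (Vt (φ x₀ u w t) t +
          ∑ i, Vgrad (φ x₀ u w t) t i * f (φ x₀ u w t) (u t) (w t) i) t)
    -- semialgebraic descriptions
    (gX gC : (Fin n → ℝ) → ℝ) (gU : (Fin m_u → ℝ) → ℝ)
    (hX₀ : X₀ ⊆ {x | 0 ≤ gX x})
    (hY : Y ⊆ {u | 0 ≤ gU u})
    (hC : ∀ t ∈ Icc (0:ℝ) T, FR t ⊆ {x | 0 ≤ gC x})
    -- SOS certificate for the initial condition
    (s₁ : (Fin n → ℝ) → ℝ)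
    (hk₁ : IsSOSFun (fun x : Fin n → ℝ => (1 - V x 0) - s₁ x * gX x))
    (hs₁ : IsSOSFun s₁)
    -- SOS certificate for the dissipation inequality
    (s₂ s₃ s₄ : (Fin n → ℝ) → (Fin m_u → ℝ) → (Fin m_w → ℝ) → ℝ → ℝ)
    (hk₂ : IsSOSFun (fun p : (Fin n → ℝ) × (Fin m_u → ℝ) × (Fin m_w → ℝ) × ℝ =>
      -(Vt p.1 p.2.2.2 + (∑ i, Vgrad p.1 p.2.2.2 i * f p.1 p.2.1 p.2.2.1 i)
          - ∑ i, (p.2.2.1 i)^2)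
        - s₂ p.1 p.2.1 p.2.2.1 p.2.2.2 * gC p.1
        - s₃ p.1 p.2.1 p.2.2.1 p.2.2.2 * (p.2.2.2 * (T - p.2.2.2))
        - s₄ p.1 p.2.1 p.2.2.1 p.2.2.2 * gU p.2.1))
    (hs₂ : IsSOSFun (fun p : (Fin n → ℝ) × (Fin m_u → ℝ) × (Fin m_w → ℝ) × ℝ =>
      s₂ p.1 p.2.1 p.2.2.1 p.2.2.2))
    (hs₃ : IsSOSFun (fun p : (Fin n → ℝ) × (Fin m_u → ℝ) × (Fin m_w → ℝ) × ℝ =>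
      s₃ p.1 p.2.1 p.2.2.1 p.2.2.2))
    (hs₄ : IsSOSFun (fun p : (Fin n → ℝ) × (Fin m_u → ℝ) × (Fin m_w → ℝ) × ℝ =>
      s₄ p.1 p.2.1 p.2.2.1 p.2.2.2)) :
    FR T ⊆ {x : Fin n → ℝ | zd x ⬝ᵥ (P T).mulVec (zd x) ≤ 1 + γ} := by
  have sosNonneg : ∀ {α : Type} {g : α → ℝ}, IsSOSFun g → ∀ a, 0 ≤ g a := by
    rintro α g ⟨k, q, hq⟩ a
    rw [hq a]
    exact Finset.sum_nonneg fun i _ => sq_nonneg _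
  intro y hy
  rw [hFR T] at hy
  obtain ⟨x₀, hx₀, u, hu, w, hw, hyeq⟩ := hy
  set F : ℝ → ℝ := fun s => V (φ x₀ u w s) s with hF
  set g : ℝ → ℝ := fun t => ∑ i, (w t i) ^ 2 with hg
  -- derivative of F
  have hder : ∀ t ∈ Icc (0:ℝ) T, HasDerivAt F
      (Vt (φ x₀ u w t) t + ∑ i, Vgrad (φ x₀ u w t) t i * f (φ x₀ u w t) (u t) (w t) i) t :=
    hchain x₀ hx₀ u hu w hw
  -- membership of trajectory in FR t
  have htraj : ∀ t, φ x₀ u w t ∈ FR t := by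
    intro t
    rw [hFR t]
    exact ⟨x₀, hx₀, u, hu, w, hw, rfl⟩
  -- pointwise derivative bound on the open interval
  have hbound : ∀ t ∈ Ioo (0:ℝ) T,
      Vt (φ x₀ u w t) t + ∑ i, Vgrad (φ x₀ u w t) t i * f (φ x₀ u w t) (u t) (w t) i ≤ g t := by
    intro t ht
    have htI : t ∈ Icc (0:ℝ) T := ⟨ht.1.le, ht.2.le⟩
    set p : (Fin n → ℝ) × (Fin m_u → ℝ) × (Fin m_w → ℝ) × ℝ := (φ x₀ u w t, u t, w t, t)
    have h2 := sosNonneg hk₂ p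
    have hgC : 0 ≤ gC (φ x₀ u w t) := hC t htI (htraj t)
    have hgU : 0 ≤ gU (u t) := by
      apply hY
      rw [hUY] at hu
      exact hu t htI
    have htT : 0 ≤ t * (T - t) := mul_nonneg ht.1.le (sub_nonneg.2 ht.2.le)
    have h2' : 0 ≤ s₂ p.1 p.2.1 p.2.2.1 p.2.2.2 := sosNonneg hs₂ p
    have h3' : 0 ≤ s₃ p.1 p.2.1 p.2.2.1 p.2.2.2 := sosNonneg hs₃ p
    have h4' : 0 ≤ s₄ p.1 p.2.1 p.2.2.1 p.2.2.2 := sosNonneg hs₄ p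
    have hm2 : 0 ≤ s₂ p.1 p.2.1 p.2.2.1 p.2.2.2 * gC p.1 := mul_nonneg h2' hgC
    have hm3 : 0 ≤ s₃ p.1 p.2.1 p.2.2.1 p.2.2.2 * (p.2.2.2 * (T - p.2.2.2)) :=
      mul_nonneg h3' htT
    have hm4 : 0 ≤ s₄ p.1 p.2.1 p.2.2.1 p.2.2.2 * gU p.2.1 := mul_nonneg h4' hgU
    simp only [p] at h2 hm2 hm3 hm4
    dsimp only [g]
    linarith
  -- integrability of g
  have hwW := hw
  rw [hWγ] at hwW
  have hint : MeasureTheory.IntegrableOn g (Icc (0:ℝ) T) MeasureTheory.volume := by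
    rw [integrableOn_Icc_iff_integrableOn_Ioc]
    exact (intervalIntegrable_iff_integrableOn_Ioc_of_le hT.le).1 hwW.1
  -- continuity of F on [0,T]
  have hcont : ContinuousOn F (Icc (0:ℝ) T) := fun t ht =>
    (hder t ht).continuousAt.continuousWithinAt
  -- FTC-type inequality
  have hFTC : F T - F 0 ≤ ∫ s in (0:ℝ)..T, g s := by
    apply intervalIntegral.sub_le_integral_of_hasDeriv_right_of_le hT.le hcont _ hint
    · intro t ht
      exact hbound t ht
    · intro t ht
      exact ((hder t ⟨ht.1.le, ht.2.le⟩).hasDerivWithinAt)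
  -- initial bound
  have hF0 : F 0 ≤ 1 := by
    have h1 := sosNonneg hk₁ x₀
    have hs1 : 0 ≤ s₁ x₀ := sosNonneg hs₁ x₀
    have hgX : 0 ≤ gX x₀ := hX₀ hx₀
    have : 0 ≤ s₁ x₀ * gX x₀ := mul_nonneg hs1 hgX
    simp only [F, hφ0]
    linarith
  have hgγ : (∫ s in (0:ℝ)..T, g s) < γ := hwW.2
  have hFT : F T ≤ 1 + γ := by linarith
  show zd y ⬝ᵥ (P T).mulVec (zd y) ≤ 1 + γ
  rw [← hyeq, ← hVdef]
  exact hFT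
end
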